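/- Let 1 ≤ N < L be integers and let z, z′ be nonzero complex numbers with z^L ≠ (z′)^L. Let w_1,…,w_N ∈ ℂ satisfy w_j^N (w_j+1)^{L−N} = z^L for every j, and let w′_1,…,w′_N ∈ ℂ satisfy (w′_j)^N (w′_j+1)^{L−N} = (z′)^L for every j. Assume ∏_{j=1}^N |w′_j+1| < ∏_{j=1}^N |w_j+1|. Then for every k with 1 ≤ k ≤ N and every integer a, ∑_{X ∈ 𝒳_N(L), x_k ≥ a} R_X(W)·L_X(W′) = (z/z′)^{(k−1)L} · ∏_{j=1}^N ( (w_j+1) w′_j / ( w_j (w′_j+1) ) )^{k−1} · ∑_{X ∈ 𝒳_N(L), x_1 ≥ a} R_X(W)·L_X(W′), where both families are summable and the sums are their (t)sums. -/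

import Mathlib

open scoped BigOperators

/-- The configuration space `𝒳_N(L)`: strictly increasing `N`-tuples of integers
whose entries all lie within a window of length `L` (equivalently,
`x_1 < x_2 < ⋯ < x_N < x_1 + L`). -/
def XNL (N L : ℕ) : Set (Fin N → ℤ) :=
  {X | StrictMono X ∧ ∀ i j, X i < X j + (L : ℤ)}

/-- `L_X(W) = det[w_i^j (w_i+1)^{x_j - j}]_{i,j=1}^N` (1-based indices, integer powers). -/
noncomputable def LXdet {N : ℕ} (X : Fin N → ℤ) (w : Fin N → ℂ) : ℂ :=
  Matrix.det (Matrix.of fun i j : Fin N =>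
    w i ^ (((j : ℕ) : ℤ) + 1) * (w i + 1) ^ (X j - (((j : ℕ) : ℤ) + 1)))

/-- `R_X(W) = det[w_i^{-j} (w_i+1)^{-x_j + j}]_{i,j=1}^N` (1-based indices, integer powers). -/
noncomputable def RXdet {N : ℕ} (X : Fin N → ℤ) (w : Fin N → ℂ) : ℂ :=
  Matrix.det (Matrix.of fun i j : Fin N =>
    w i ^ (-(((j : ℕ) : ℤ) + 1)) * (w i + 1) ^ (-(X j) + (((j : ℕ) : ℤ) + 1)))

/-! ### Auxiliary material -/

/-- One-step cyclic shift on configurations. -/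
def Tsh (n L : ℕ) (X : Fin (n + 1) → ℤ) : Fin (n + 1) → ℤ :=
  fun j => if h : (j : ℕ) < n then X ⟨(j : ℕ) + 1, by omega⟩ else X ⟨0, Nat.succ_pos n⟩ + (L : ℤ)

/-- Inverse of the one-step cyclic shift. -/
def TshInv (n L : ℕ) (X : Fin (n + 1) → ℤ) : Fin (n + 1) → ℤ :=
  fun j => if (j : ℕ) = 0 then X ⟨n, Nat.lt_succ_self n⟩ - (L : ℤ)
    else X ⟨(j : ℕ) - 1, by omega⟩

def Teq (n L : ℕ) : (Fin (n + 1) → ℤ) ≃ (Fin (n + 1) → ℤ) where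
  toFun := Tsh n L
  invFun := TshInv n L
  left_inv X := by
    funext j
    rcases eq_or_ne (j : ℕ) 0 with hj | hj
    · have hj' : j = ⟨0, Nat.succ_pos n⟩ := Fin.ext hj
      subst hj'
      simp only [TshInv, Tsh, if_pos rfl, dif_neg (lt_irrefl n), if_true]
      ring
    · have h1 : (j : ℕ) - 1 < n := by omega
      simp only [TshInv, Tsh, if_neg hj, dif_pos h1]
      have h2 : (⟨(j : ℕ) - 1 + 1, by omega⟩ : Fin (n + 1)) = j :=
        Fin.ext (by show (j : ℕ) - 1 + 1 = (j : ℕ); omega)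
      rw [h2]
  right_inv X := by
    funext j
    rcases Nat.lt_or_ge (j : ℕ) n with hj | hj
    · have hj1 : (j : ℕ) + 1 ≠ 0 := by omega
      simp only [Tsh, TshInv, dif_pos hj, if_neg hj1]
      have h2 : (⟨(j : ℕ) + 1 - 1, by omega⟩ : Fin (n + 1)) = j :=
        Fin.ext (by show (j : ℕ) + 1 - 1 = (j : ℕ); omega)
      rw [h2]
    · have hj' : j = ⟨n, Nat.lt_succ_self n⟩ := Fin.ext (show (j : ℕ) = n by omega)
      subst hj'
      simp only [Tsh, TshInv, dif_neg (lt_irrefl n), if_pos rfl, if_true]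
      ring
 
lemma Tsh_mem {n L : ℕ} (hL : n + 1 < L) {X : Fin (n + 1) → ℤ}
    (hX : X ∈ XNL (n + 1) L) : Tsh n L X ∈ XNL (n + 1) L := by
  obtain ⟨hmono, hwin⟩ := hX
  have hLpos : (0 : ℤ) < (L : ℤ) := by exact_mod_cast (by omega : 0 < L)
  constructor
  · intro i j hij
    have hij' : (i : ℕ) < (j : ℕ) := hij
    unfold Tsh
    by_cases hi : (i : ℕ) < n
    · by_cases hj : (j : ℕ) < n
      · simp only [dif_pos hi, dif_pos hj]
        exact hmono (Fin.mk_lt_mk.mpr (by omega))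
      · simp only [dif_pos hi, dif_neg hj]
        exact hwin _ _
    · exfalso; omega
  · intro i j
    unfold Tsh
    by_cases hi : (i : ℕ) < n
    · by_cases hj : (j : ℕ) < n
      · simp only [dif_pos hi, dif_pos hj]; exact hwin _ _
      · simp only [dif_pos hi, dif_neg hj]
        have := hwin ⟨(i : ℕ) + 1, by omega⟩ ⟨0, Nat.succ_pos n⟩
        linarith
    · by_cases hj : (j : ℕ) < n
      · simp only [dif_neg hi, dif_pos hj]
        have h0 : X ⟨0, Nat.succ_pos n⟩ < X ⟨(j : ℕ) + 1, by omega⟩ :=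
          hmono (Fin.mk_lt_mk.mpr (by omega))
        linarith
      · simp only [dif_neg hi, dif_neg hj]; linarith
 
lemma TshInv_mem {n L : ℕ} (hL : n + 1 < L) {X : Fin (n + 1) → ℤ}
    (hX : X ∈ XNL (n + 1) L) : TshInv n L X ∈ XNL (n + 1) L := by
  obtain ⟨hmono, hwin⟩ := hX
  have hLpos : (0 : ℤ) < (L : ℤ) := by exact_mod_cast (by omega : 0 < L)
  constructor
  · intro i j hij
    have hij' : (i : ℕ) < (j : ℕ) := hij
    unfold TshInv
    by_cases hi : (i : ℕ) = 0
    · have hj : ¬ (j : ℕ) = 0 := by omega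
      simp only [if_pos hi, if_neg hj]
      have := hwin ⟨n, Nat.lt_succ_self n⟩ ⟨(j : ℕ) - 1, by omega⟩
      linarith
    · have hj : ¬ (j : ℕ) = 0 := by omega
      simp only [if_neg hi, if_neg hj]
      exact hmono (Fin.mk_lt_mk.mpr (by omega))
  · intro i j
    unfold TshInv
    by_cases hi : (i : ℕ) = 0
    · by_cases hj : (j : ℕ) = 0
      · simp only [if_pos hi, if_pos hj]; linarith
      · simp only [if_pos hi, if_neg hj]
        have := hwin ⟨n, Nat.lt_succ_self n⟩ ⟨(j : ℕ) - 1, by omega⟩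
        linarith
    · by_cases hj : (j : ℕ) = 0
      · simp only [if_neg hi, if_pos hj]
        have h0 : X ⟨(i : ℕ) - 1, by omega⟩ < X ⟨n, Nat.lt_succ_self n⟩ :=
          hmono (Fin.mk_lt_mk.mpr (by omega))
        linarith
      · simp only [if_neg hi, if_neg hj]; exact hwin _ _

private lemma zpow_entry_eq {u v C : ℂ} (hu : u ≠ 0) (hv : v ≠ 0) {a b c d : ℤ}
    (h : u ^ (a - c) * v ^ (b - d) = C) : u ^ a * v ^ b = C * (u ^ c * v ^ d) := by
  have h1 : u ^ a = u ^ (a - c) * u ^ c := by rw [← zpow_add₀ hu]; congr 1; ring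
  have h2 : v ^ b = v ^ (b - d) * v ^ d := by rw [← zpow_add₀ hv]; congr 1; ring
  rw [h1, h2, ← h]; ring


private lemma zpow_form2 {u v : ℂ} (hu : u ≠ 0) (hv : v ≠ 0) (a b c d e f : ℤ)
    (h1 : a = c + e) (h2 : b = d + f) :
    u ^ a * v ^ b = (u ^ c * v ^ d) * (u ^ e * v ^ f) := by
  subst h1 h2; rw [zpow_add₀ hu, zpow_add₀ hv]; ring

private lemma zpow_form3 {u v : ℂ} (hu : u ≠ 0) (hv : v ≠ 0) (a b c d e f g h : ℤ)
    (h1 : a = c + e + g) (h2 : b = d + f + h) :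
    u ^ a * v ^ b = (u ^ c * v ^ d) * ((u ^ e * v ^ f) * (u ^ g * v ^ h)) := by
  subst h1 h2; rw [zpow_add₀ hu, zpow_add₀ hv, zpow_add₀ hu, zpow_add₀ hv]; ring

private lemma div_eq_zpow {u v : ℂ} : u / v = u ^ (1 : ℤ) * v ^ (-1 : ℤ) := by
  rw [zpow_one, zpow_neg_one, div_eq_mul_inv]

private lemma div_eq_zpow' {u v : ℂ} : v / u = u ^ (-1 : ℤ) * v ^ (1 : ℤ) := by
  rw [zpow_one, zpow_neg_one, div_eq_mul_inv]; ring

private lemma inv_pow_eq {u v zL : ℂ} {n L : ℕ} (hL : n + 1 ≤ L)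
    (hz : u ^ (n + 1) * v ^ (L - (n + 1)) = zL) :
    zL⁻¹ = u ^ (-((n : ℤ) + 1)) * v ^ ((n : ℤ) + 1 - (L : ℤ)) := by
  rw [← hz, mul_inv, ← zpow_natCast u, ← zpow_natCast v, ← zpow_neg, ← zpow_neg]
  congr 2 <;> omega

private lemma pow_eq_zpow {u v zL : ℂ} {n L : ℕ} (hL : n + 1 ≤ L)
    (hz : u ^ (n + 1) * v ^ (L - (n + 1)) = zL) :
    zL = u ^ ((n : ℤ) + 1) * v ^ ((L : ℤ) - ((n : ℤ) + 1)) := by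
  rw [← hz, ← zpow_natCast u, ← zpow_natCast v]
  congr 2 <;> omega

private lemma RX_step {n L : ℕ} (hL : n + 1 ≤ L) {z : ℂ}
    (w : Fin (n + 1) → ℂ) (hw0 : ∀ i, w i ≠ 0) (hw1 : ∀ i, w i + 1 ≠ 0)
    (hw : ∀ i, w i ^ (n + 1) * (w i + 1) ^ (L - (n + 1)) = z ^ L)
    (X : Fin (n + 1) → ℤ) :
    RXdet (Tsh n L X) w =
      ((-1 : ℂ) ^ n * (z ^ L)⁻¹ * ∏ i, w i / (w i + 1)) * RXdet X w := by
  classical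
  set M : Matrix (Fin (n + 1)) (Fin (n + 1)) ℂ := Matrix.of fun i j =>
    w i ^ (-(((j : ℕ) : ℤ) + 1)) * (w i + 1) ^ (-(X j) + (((j : ℕ) : ℤ) + 1)) with hM
  have key : (Matrix.of fun i j : Fin (n + 1) =>
      w i ^ (-(((j : ℕ) : ℤ) + 1)) * (w i + 1) ^ (-(Tsh n L X j) + (((j : ℕ) : ℤ) + 1)))
      = Matrix.of (fun i j : Fin (n + 1) => (w i / (w i + 1)) *
          (Matrix.of (fun i j : Fin (n + 1) =>
            (if (j : ℕ) < n then (1 : ℂ) else (z ^ L)⁻¹) *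
              (M.submatrix id (finRotate (n + 1))) i j) i j)) := by
    ext i j
    simp only [Matrix.of_apply, Matrix.submatrix_apply, id_eq, hM]
    by_cases hj : (j : ℕ) < n
    · have hσ : finRotate (n + 1) j = ⟨(j : ℕ) + 1, by omega⟩ := by
        apply Fin.ext
        rw [finRotate_succ_apply]
        rw [Fin.val_add_one_of_lt (by rw [Fin.lt_iff_val_lt_val, Fin.val_last]; omega)]
      rw [hσ, if_pos hj, one_mul]
      simp only [Tsh, dif_pos hj]
      rw [div_eq_zpow]
      exact zpow_form2 (hw0 i) (hw1 i) _ _ _ _ _ _ (by push_cast; ring) (by push_cast; ring)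
    · have hj' : (j : ℕ) = n := by omega
      have hσ : finRotate (n + 1) j = ⟨0, Nat.succ_pos n⟩ := by
        apply Fin.ext
        rw [finRotate_succ_apply]
        have : j = Fin.last n := Fin.ext (by rw [Fin.val_last]; exact hj')
        rw [this, Fin.last_add_one]
        rfl
      rw [hσ, if_neg hj]
      simp only [Tsh, dif_neg hj]
      rw [div_eq_zpow, inv_pow_eq hL (hw i)]
      refine zpow_form3 (hw0 i) (hw1 i) _ _ _ _ _ _ _ _ ?_ ?_
      · push_cast [hj']; ring
      · push_cast [hj']; ring
  unfold RXdet
  rw [key, Matrix.det_mul_column, Matrix.det_mul_row, Matrix.det_permute']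
  have hprod : (∏ j : Fin (n + 1), if (j : ℕ) < n then (1 : ℂ) else (z ^ L)⁻¹)
      = (z ^ L)⁻¹ := by
    rw [Fin.prod_univ_castSucc]
    simp [Fin.is_lt]
  rw [hprod, sign_finRotate]
  push_cast
  ring

private lemma LX_step {n L : ℕ} (hL : n + 1 ≤ L) {z' : ℂ}
    (w' : Fin (n + 1) → ℂ) (hw0 : ∀ i, w' i ≠ 0) (hw1 : ∀ i, w' i + 1 ≠ 0)
    (hw : ∀ i, w' i ^ (n + 1) * (w' i + 1) ^ (L - (n + 1)) = z' ^ L)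
    (X : Fin (n + 1) → ℤ) :
    LXdet (Tsh n L X) w' =
      ((-1 : ℂ) ^ n * (z' ^ L) * ∏ i, (w' i + 1) / w' i) * LXdet X w' := by
  classical
  set M : Matrix (Fin (n + 1)) (Fin (n + 1)) ℂ := Matrix.of fun i j =>
    w' i ^ (((j : ℕ) : ℤ) + 1) * (w' i + 1) ^ (X j - (((j : ℕ) : ℤ) + 1)) with hM
  have key : (Matrix.of fun i j : Fin (n + 1) =>
      w' i ^ (((j : ℕ) : ℤ) + 1) * (w' i + 1) ^ (Tsh n L X j - (((j : ℕ) : ℤ) + 1)))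
      = Matrix.of (fun i j : Fin (n + 1) => ((w' i + 1) / w' i) *
          (Matrix.of (fun i j : Fin (n + 1) =>
            (if (j : ℕ) < n then (1 : ℂ) else (z' ^ L)) *
              (M.submatrix id (finRotate (n + 1))) i j) i j)) := by
    ext i j
    simp only [Matrix.of_apply, Matrix.submatrix_apply, id_eq, hM]
    by_cases hj : (j : ℕ) < n
    · have hσ : finRotate (n + 1) j = ⟨(j : ℕ) + 1, by omega⟩ := by
        apply Fin.ext
        rw [finRotate_succ_apply]
        rw [Fin.val_add_one_of_lt (by rw [Fin.lt_iff_val_lt_val, Fin.val_last]; omega)]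
      rw [hσ, if_pos hj, one_mul]
      simp only [Tsh, dif_pos hj]
      rw [div_eq_zpow']
      exact zpow_form2 (hw0 i) (hw1 i) _ _ _ _ _ _ (by push_cast; ring) (by push_cast; ring)
    · have hj' : (j : ℕ) = n := by omega
      have hσ : finRotate (n + 1) j = ⟨0, Nat.succ_pos n⟩ := by
        apply Fin.ext
        rw [finRotate_succ_apply]
        have : j = Fin.last n := Fin.ext (by rw [Fin.val_last]; exact hj')
        rw [this, Fin.last_add_one]
        rfl
      rw [hσ, if_neg hj]
      simp only [Tsh, dif_neg hj]
      rw [div_eq_zpow', pow_eq_zpow hL (hw i)]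
      refine zpow_form3 (hw0 i) (hw1 i) _ _ _ _ _ _ _ _ ?_ ?_
      · push_cast [hj']; ring
      · push_cast [hj']; ring
  unfold LXdet
  rw [key, Matrix.det_mul_column, Matrix.det_mul_row, Matrix.det_permute']
  have hprod : (∏ j : Fin (n + 1), if (j : ℕ) < n then (1 : ℂ) else (z' ^ L))
      = (z' ^ L) := by
    rw [Fin.prod_univ_castSucc]
    simp [Fin.is_lt]
  rw [hprod, sign_finRotate]
  push_cast
  ring


private lemma RX_add {n : ℕ} (w : Fin (n + 1) → ℂ) (hw1 : ∀ i, w i + 1 ≠ 0)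
    (X : Fin (n + 1) → ℤ) (m : ℕ) :
    RXdet (fun i => X i + (m : ℤ)) w = (∏ i, ((w i + 1) ^ m)⁻¹) * RXdet X w := by
  unfold RXdet
  have key : (Matrix.of fun i j : Fin (n + 1) =>
      w i ^ (-(((j : ℕ) : ℤ) + 1)) * (w i + 1) ^ (-(X j + (m : ℤ)) + (((j : ℕ) : ℤ) + 1)))
      = Matrix.of (fun i j : Fin (n + 1) => ((w i + 1) ^ m)⁻¹ *
          (Matrix.of (fun i j : Fin (n + 1) =>
             w i ^ (-(((j : ℕ) : ℤ) + 1)) * (w i + 1) ^ (-(X j) + (((j : ℕ) : ℤ) + 1))) i j)) := by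
    ext i j
    simp only [Matrix.of_apply]
    rw [← zpow_natCast (w i + 1) m, ← zpow_neg,
      show (-(X j + (m : ℤ)) + (((j : ℕ) : ℤ) + 1))
        = (-(m : ℤ)) + (-(X j) + (((j : ℕ) : ℤ) + 1)) by ring,
      zpow_add₀ (hw1 i)]
    ring
  rw [key, Matrix.det_mul_column]

private lemma LX_add {n : ℕ} (w : Fin (n + 1) → ℂ) (hw1 : ∀ i, w i + 1 ≠ 0)
    (X : Fin (n + 1) → ℤ) (m : ℕ) :
    LXdet (fun i => X i + (m : ℤ)) w = (∏ i, (w i + 1) ^ m) * LXdet X w := by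
  unfold LXdet
  have key : (Matrix.of fun i j : Fin (n + 1) =>
      w i ^ ((((j : ℕ) : ℤ)) + 1) * (w i + 1) ^ (X j + (m : ℤ) - (((j : ℕ) : ℤ) + 1)))
      = Matrix.of (fun i j : Fin (n + 1) => ((w i + 1) ^ m) *
          (Matrix.of (fun i j : Fin (n + 1) =>
             w i ^ ((((j : ℕ) : ℤ)) + 1) * (w i + 1) ^ (X j - (((j : ℕ) : ℤ) + 1))) i j)) := by
    ext i j
    simp only [Matrix.of_apply]
    rw [← zpow_natCast (w i + 1) m,
      show (X j + (m : ℤ) - (((j : ℕ) : ℤ) + 1))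
        = ((m : ℤ)) + (X j - (((j : ℕ) : ℤ) + 1)) by ring,
      zpow_add₀ (hw1 i)]
    ring
  rw [key, Matrix.det_mul_column]

lemma XNL_shift {N L : ℕ} {X : Fin N → ℤ} (hX : X ∈ XNL N L) (t : ℤ) :
    (fun i => X i + t) ∈ XNL N L := by
  obtain ⟨h1, h2⟩ := hX
  constructor
  · intro i j hij
    have := h1 hij
    simp only
    omega
  · intro i j
    have := h2 i j
    simp only
    omega

/-- The set of normalized configurations: first entry `0`. -/
def D0 (n L : ℕ) :=
  {d : Fin (n + 1) → ℤ // d ∈ XNL (n + 1) L ∧ d ⟨0, Nat.succ_pos n⟩ = 0}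

instance D0_finite (n L : ℕ) : Finite (D0 n L) := by
  have key : ∀ d : D0 n L, ∀ i, 0 ≤ d.1 i ∧ d.1 i ≤ (L : ℤ) := by
    intro d i
    obtain ⟨⟨hmono, hwin⟩, h0⟩ := d.2
    constructor
    · have h2 : d.1 ⟨0, Nat.succ_pos n⟩ ≤ d.1 i :=
        hmono.monotone (by rw [Fin.le_def]; exact Nat.zero_le _)
      omega
    · have h1 := hwin i ⟨0, Nat.succ_pos n⟩
      omega
  apply Finite.of_injective (fun d : D0 n L =>
    (fun i => (⟨d.1 i, Set.mem_Icc.mpr (key d i)⟩ : Set.Icc (0 : ℤ) (L : ℤ))))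
  intro d d' h
  apply Subtype.ext
  funext i
  exact congrArg Subtype.val (congrFun h i)

def S0equiv (n L : ℕ) (a : ℤ) :
    {X : Fin (n + 1) → ℤ // X ∈ XNL (n + 1) L ∧ a ≤ X ⟨0, Nat.succ_pos n⟩} ≃ (D0 n L) × ℕ where
  toFun X := (⟨fun i => X.1 i + -(X.1 ⟨0, Nat.succ_pos n⟩),
      ⟨XNL_shift X.2.1 _, by simp⟩⟩, (X.1 ⟨0, Nat.succ_pos n⟩ - a).toNat)
  invFun p := ⟨fun i => p.1.1 i + a + (p.2 : ℤ),
      ⟨XNL_shift (XNL_shift p.1.2.1 a) (p.2 : ℤ), by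
        have h0 := p.1.2.2
        simp only
        omega⟩⟩
  left_inv X := by
    apply Subtype.ext
    funext i
    have h0 := X.2.2
    simp only
    omega
  right_inv p := by
    have h0 := p.1.2.2
    apply Prod.ext
    · apply Subtype.ext
      funext i
      simp only
      omega
    · simp only
      omega


/-- Reduction of the sum over `{x_k ≥ a}` to the sum over `{x_1 ≥ a}`.
Here `k : Fin N` denotes the (0-based) index, so that the 1-based index is `k+1`. -/
theorem sum_xk_ge_eq_const_mul_sum_x1_ge
    (N L : ℕ) (hN : 1 ≤ N) (hNL : N < L)
    (z z' : ℂ) (hz : z ≠ 0) (hz' : z' ≠ 0) (hzz : z ^ L ≠ z' ^ L)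
    (w w' : Fin N → ℂ)
    (hw : ∀ j, w j ^ N * (w j + 1) ^ (L - N) = z ^ L)
    (hw' : ∀ j, w' j ^ N * (w' j + 1) ^ (L - N) = z' ^ L)
    (habs : ∏ j, ‖w' j + 1‖ < ∏ j, ‖w j + 1‖)
    (k : Fin N) (a : ℤ) :
    Summable (fun X : {X : Fin N → ℤ // X ∈ XNL N L ∧ a ≤ X k} =>
        RXdet X.1 w * LXdet X.1 w') ∧
    Summable (fun X : {X : Fin N → ℤ // X ∈ XNL N L ∧ a ≤ X (⟨0, hN⟩ : Fin N)} =>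
        RXdet X.1 w * LXdet X.1 w') ∧
    (∑' X : {X : Fin N → ℤ // X ∈ XNL N L ∧ a ≤ X k}, RXdet X.1 w * LXdet X.1 w') =
      (z / z') ^ ((k : ℕ) * L) *
        (∏ j, ((w j + 1) * w' j / (w j * (w' j + 1))) ^ (k : ℕ)) *
        ∑' X : {X : Fin N → ℤ // X ∈ XNL N L ∧ a ≤ X (⟨0, hN⟩ : Fin N)},
          RXdet X.1 w * LXdet X.1 w' := by
  obtain ⟨n, rfl⟩ : ∃ n, N = n + 1 := ⟨N - 1, by omega⟩
  have hL1 : n + 1 ≤ L := le_of_lt hNL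
  have hzL : z ^ L ≠ 0 := pow_ne_zero _ hz
  have hzL' : z' ^ L ≠ 0 := pow_ne_zero _ hz'
  have hw0 : ∀ i, w i ≠ 0 := by
    intro i h; apply hzL; rw [← hw i, h]; simp
  have hw1 : ∀ i, w i + 1 ≠ 0 := by
    intro i h; apply hzL
    rw [← hw i, h, zero_pow (by omega : L - (n + 1) ≠ 0), mul_zero]
  have hw0' : ∀ i, w' i ≠ 0 := by
    intro i h; apply hzL'; rw [← hw' i, h]; simp
  have hw1' : ∀ i, w' i + 1 ≠ 0 := by
    intro i h; apply hzL'
    rw [← hw' i, h, zero_pow (by omega : L - (n + 1) ≠ 0), mul_zero]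
  set F : (Fin (n + 1) → ℤ) → ℂ := fun Y => RXdet Y w * LXdet Y w' with hFdef
  set r : ℂ := ∏ i, (w' i + 1) / (w i + 1) with hrdef
  have hr : ‖r‖ < 1 := by
    have h1 : ‖r‖ = (∏ j, ‖w' j + 1‖) / ∏ j, ‖w j + 1‖ := by
      rw [hrdef, norm_prod]
      rw [Finset.prod_congr rfl (fun j _ => norm_div (w' j + 1) (w j + 1)),
        Finset.prod_div_distrib]
    have hpos : 0 < ∏ j, ‖w j + 1‖ :=
      Finset.prod_pos fun j _ => norm_pos_iff.mpr (hw1 j)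
    rw [h1, div_lt_one hpos]
    exact habs
  have hFshift : ∀ (Y : Fin (n + 1) → ℤ) (m : ℕ), F (fun i => Y i + (m : ℤ)) = r ^ m * F Y := by
    intro Y m
    have hrm : r ^ m = (∏ i, ((w i + 1) ^ m)⁻¹) * ∏ i, (w' i + 1) ^ m := by
      rw [hrdef]
      calc (∏ i, (w' i + 1) / (w i + 1)) ^ m
          = ∏ i, ((w' i + 1) / (w i + 1)) ^ m := by rw [Finset.prod_pow]
        _ = ∏ i, (((w i + 1) ^ m)⁻¹ * (w' i + 1) ^ m) := by
            refine Finset.prod_congr rfl fun i _ => ?_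
            rw [div_pow, div_eq_mul_inv, mul_comm]
        _ = (∏ i, ((w i + 1) ^ m)⁻¹) * ∏ i, (w' i + 1) ^ m := Finset.prod_mul_distrib
    simp only [hFdef]
    rw [RX_add w hw1 Y m, LX_add w' hw1' Y m, hrm]
    ring
  set c : ℂ := (z / z') ^ L * ∏ j, ((w j + 1) * w' j / (w j * (w' j + 1))) with hcdef
  set dd : ℂ := ((-1 : ℂ) ^ n * (z ^ L)⁻¹ * ∏ i, w i / (w i + 1)) *
      ((-1 : ℂ) ^ n * (z' ^ L) * ∏ i, (w' i + 1) / w' i) with hdddef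
  have hFT : ∀ Y, F (Tsh n L Y) = dd * F Y := by
    intro Y
    simp only [hFdef]
    rw [RX_step hL1 w hw0 hw1 hw Y, LX_step hL1 w' hw0' hw1' hw' Y, hdddef]
    ring
  have hcd : c * dd = 1 := by
    have hsign : ((-1 : ℂ)) ^ n * (-1) ^ n = 1 := by rw [← mul_pow]; norm_num
    have hone : ∀ i : Fin (n + 1),
        ((w i + 1) * w' i / (w i * (w' i + 1))) * ((w i / (w i + 1)) * ((w' i + 1) / w' i))
          = 1 := by
      intro i
      have h1 := hw0 i
      have h2 := hw1 i
      have h3 := hw0' i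
      have h4 := hw1' i
      field_simp
    have hprod : (∏ j, ((w j + 1) * w' j / (w j * (w' j + 1)))) *
        ((∏ i, w i / (w i + 1)) * ∏ i, (w' i + 1) / w' i) = 1 := by
      rw [← Finset.prod_mul_distrib, ← Finset.prod_mul_distrib,
        Finset.prod_congr rfl fun i _ => hone i, Finset.prod_const_one]
    have hz2 : (z / z') ^ L * ((z ^ L)⁻¹ * z' ^ L) = 1 := by
      rw [div_pow]
      field_simp
    have hexp : c * dd = (((-1 : ℂ)) ^ n * (-1) ^ n) *
        ((z / z') ^ L * ((z ^ L)⁻¹ * z' ^ L)) *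
        ((∏ j, ((w j + 1) * w' j / (w j * (w' j + 1)))) *
          ((∏ i, w i / (w i + 1)) * ∏ i, (w' i + 1) / w' i)) := by
      rw [hcdef, hdddef]; ring
    rw [hexp, hsign, hz2, hprod]
    ring
  have hF : ∀ Y, F Y = c * F (Tsh n L Y) := by
    intro Y
    rw [hFT Y, ← mul_assoc, hcd, one_mul]
  haveI := D0_finite n L
  set e0 := S0equiv n L a with he0
  have hg : Summable (fun p : (D0 n L) × ℕ => F (fun i => p.1.1 i + a) * r ^ p.2) :=
    summable_mul_of_summable_norm (R := ℂ) (f := fun d : D0 n L => F (fun i => d.1 i + a))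
      (g := fun m : ℕ => r ^ m) Summable.of_finite
      (by simp only [norm_pow]
          exact summable_geometric_of_lt_one (norm_nonneg r) hr)
  have hS0 : Summable
      (fun X : {X : Fin (n + 1) → ℤ // X ∈ XNL (n + 1) L ∧ a ≤ X (⟨0, hN⟩ : Fin (n + 1))} =>
        F X.1) := by
    apply (Equiv.summable_iff e0.symm).mp
    apply hg.congr
    intro p
    show F (fun i => p.1.1 i + a) * r ^ p.2 = F (fun i => p.1.1 i + a + (p.2 : ℤ))
    exact (mul_comm (F fun i => p.1.1 i + a) (r ^ p.2)).trans
      (hFshift (fun i => p.1.1 i + a) p.2).symm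
  have main : ∀ (m : ℕ) (k : Fin (n + 1)), (k : ℕ) = m →
      Summable (fun X : {X : Fin (n + 1) → ℤ // X ∈ XNL (n + 1) L ∧ a ≤ X k} => F X.1) ∧
      (∑' X : {X : Fin (n + 1) → ℤ // X ∈ XNL (n + 1) L ∧ a ≤ X k}, F X.1) =
        c ^ (k : ℕ) *
          ∑' X : {X : Fin (n + 1) → ℤ // X ∈ XNL (n + 1) L ∧
            a ≤ X (⟨0, hN⟩ : Fin (n + 1))}, F X.1 := by
    intro m
    induction m with
    | zero =>
      intro k hk
      have hk0 : k = ⟨0, hN⟩ := Fin.ext hk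
      subst hk0
      refine ⟨hS0, ?_⟩
      norm_num
    | succ m ih =>
      intro k hk
      have hm1 : m < n + 1 := by omega
      have hmn : m < n := by have := k.isLt; omega
      set k' : Fin (n + 1) := ⟨m, hm1⟩ with hk'
      have hpt : ∀ Y : Fin (n + 1) → ℤ, Tsh n L Y k' = Y k := by
        intro Y
        simp only [Tsh, hk', dif_pos hmn]
        congr 1
        exact Fin.ext (by show m + 1 = (k : ℕ); omega)
      have hiff : ∀ Y : Fin (n + 1) → ℤ,
          (Y ∈ XNL (n + 1) L ∧ a ≤ Y k) ↔
            ((Teq n L) Y ∈ XNL (n + 1) L ∧ a ≤ ((Teq n L) Y) k') := by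
        intro Y
        constructor
        · rintro ⟨h1, h2⟩
          refine ⟨Tsh_mem hNL h1, ?_⟩
          show a ≤ Tsh n L Y k'
          rw [hpt Y]; exact h2
        · rintro ⟨h1, h2⟩
          constructor
          · have h3 : TshInv n L (Tsh n L Y) ∈ XNL (n + 1) L := TshInv_mem hNL h1
            have h4 : TshInv n L (Tsh n L Y) = Y := (Teq n L).left_inv Y
            rwa [h4] at h3
          · have h2' : a ≤ Tsh n L Y k' := h2
            rwa [hpt Y] at h2'
      set e : {X : Fin (n + 1) → ℤ // X ∈ XNL (n + 1) L ∧ a ≤ X k} ≃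
          {X : Fin (n + 1) → ℤ // X ∈ XNL (n + 1) L ∧ a ≤ X k'} := (Teq n L).subtypeEquiv hiff
        with hedef
      have hkey : ∀ X : {X : Fin (n + 1) → ℤ // X ∈ XNL (n + 1) L ∧ a ≤ X k},
          F X.1 = c * F ((e X).1) := by
        rintro ⟨Y, hY⟩
        have hX : ((e ⟨Y, hY⟩) : Fin (n + 1) → ℤ) = Tsh n L Y := by
          rw [hedef]
          rfl
        rw [hX]
        exact hF Y
      obtain ⟨ihs, iht⟩ := ih k' rfl
      constructor
      · have h1 : Summable
            (fun Y : {X : Fin (n + 1) → ℤ // X ∈ XNL (n + 1) L ∧ a ≤ X k'} => c * F Y.1) :=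
          ihs.mul_left c
        have h2 := (Equiv.summable_iff e).mpr h1
        exact h2.congr fun X => (hkey X).symm
      · have t1 : (∑' X : {X : Fin (n + 1) → ℤ // X ∈ XNL (n + 1) L ∧ a ≤ X k}, F X.1)
            = ∑' X : {X : Fin (n + 1) → ℤ // X ∈ XNL (n + 1) L ∧ a ≤ X k},
                c * F ((e X).1) := tsum_congr hkey
        have t2 : (∑' X : {X : Fin (n + 1) → ℤ // X ∈ XNL (n + 1) L ∧ a ≤ X k},
              c * F ((e X).1))
            = ∑' Y : {X : Fin (n + 1) → ℤ // X ∈ XNL (n + 1) L ∧ a ≤ X k'}, c * F Y.1 :=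
          Equiv.tsum_eq e (fun Y => c * F Y.1)
        rw [t1, t2, tsum_mul_left, iht]
        have hkm : (k' : ℕ) = m := rfl
        rw [hkm, hk, pow_succ]
        ring
  obtain ⟨hsk, htk⟩ := main (k : ℕ) k rfl
  have hc : c ^ (k : ℕ) = (z / z') ^ ((k : ℕ) * L) *
      ∏ j, ((w j + 1) * w' j / (w j * (w' j + 1))) ^ (k : ℕ) := by
    rw [hcdef, mul_pow, ← pow_mul, mul_comm L (k : ℕ), ← Finset.prod_pow]
  refine ⟨hsk, hS0, htk.trans ?_⟩
  rw [hc]
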